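/- For every ε > 0 there exists a constant C > 0 such that for all natural numbers N, M, τ with 1 ≤ M ≤ N, the number of pairs (n, m) ∈ ℕ × ℕ with N ≤ n < 2N, M ≤ m < 2M, and n(n+1) + m(m+1) = τ is at most C M^ε. -/

import Mathlib

lemma sqrt_neg_one_eq_or {p n : ℕ} (hp : p.Prime) (hodd : p ≠ 2) {z w : ZMod (p^n)}
    (hn : 0 < n) (hz : z^2 = -1) (hw : w^2 = -1) : w = z ∨ w = -z := by
  haveI : NeZero (p^n) := ⟨pow_ne_zero _ hp.pos.ne'⟩
  have hz' : ((p^n : ℕ) : ℤ) ∣ (z.val:ℤ)^2 + 1 := by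
    rw [← ZMod.intCast_zmod_eq_zero_iff_dvd]
    push_cast
    rw [ZMod.natCast_val, ZMod.cast_id, hz]; ring
  have hw' : ((p^n : ℕ) : ℤ) ∣ (w.val:ℤ)^2 + 1 := by
    rw [← ZMod.intCast_zmod_eq_zero_iff_dvd]
    push_cast
    rw [ZMod.natCast_val, ZMod.cast_id, hw]; ring
  have hpZ : ((p^n : ℕ) : ℤ) = (p:ℤ)^n := by push_cast; ring
  rw [hpZ] at hz' hw'
  have hmul : (p:ℤ)^n ∣ ((w.val:ℤ) - z.val) * ((w.val:ℤ) + z.val) := by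
    have h : ((w.val:ℤ) - z.val) * ((w.val:ℤ) + z.val)
        = ((w.val:ℤ)^2 + 1) - ((z.val:ℤ)^2 + 1) := by ring
    rw [h]; exact dvd_sub hw' hz'
  have hprime : Prime (p : ℤ) := Nat.prime_iff_prime_int.mp hp
  have hnot : ¬ ((p:ℤ) ∣ ((w.val:ℤ) - z.val) ∧ (p:ℤ) ∣ ((w.val:ℤ) + z.val)) := by
    rintro ⟨h1, h2⟩
    have h2W : (p:ℤ) ∣ 2*(w.val:ℤ) := by
      have h3 := dvd_add h1 h2; have e : ((w.val:ℤ) - z.val) + ((w.val:ℤ) + z.val) = 2*(w.val:ℤ) := by ring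
      rwa [e] at h3
    have hpW : (p:ℤ) ∣ (w.val:ℤ) := by
      rcases hprime.dvd_mul.mp h2W with h | h
      · exfalso
        have : (p:ℕ) ∣ 2 := by exact_mod_cast h
        have := Nat.le_of_dvd (by norm_num) this
        have := hp.two_le
        omega
      · exact h
    have hp1 : (p:ℤ) ∣ 1 := by
      have hpn : (p:ℤ) ∣ (w.val:ℤ)^2 + 1 := (dvd_pow_self _ hn.ne').trans hw'
      have hsq : (p:ℤ) ∣ (w.val:ℤ)^2 := by rw [sq]; exact hpW.mul_right _
      have h4 : (p:ℤ) ∣ ((w.val:ℤ)^2 + 1) - (w.val:ℤ)^2 := dvd_sub hpn hsq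
      simpa using h4
    have := Int.le_of_dvd one_pos hp1
    have := hp.two_le
    omega
  have hfin : (p:ℤ)^n ∣ ((w.val:ℤ) - z.val) ∨ (p:ℤ)^n ∣ ((w.val:ℤ) + z.val) := by
    rcases Classical.em ((p:ℤ) ∣ ((w.val:ℤ) - z.val)) with h | h
    · left
      have h2 : ¬ (p:ℤ) ∣ ((w.val:ℤ) + z.val) := fun h' => hnot ⟨h, h'⟩
      exact hprime.pow_dvd_of_dvd_mul_right n h2 hmul
    · right
      exact hprime.pow_dvd_of_dvd_mul_left n h hmul
  rcases hfin with h | h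
  · left
    have : (((w.val:ℤ) - z.val : ℤ) : ZMod (p^n)) = 0 := by
      rw [ZMod.intCast_zmod_eq_zero_iff_dvd]; rwa [hpZ]
    push_cast at this
    rw [ZMod.natCast_val, ZMod.cast_id, ZMod.natCast_val, ZMod.cast_id] at this
    linear_combination this
  · right
    have : (((w.val:ℤ) + z.val : ℤ) : ZMod (p^n)) = 0 := by
      rw [ZMod.intCast_zmod_eq_zero_iff_dvd]; rwa [hpZ]
    push_cast at this
    rw [ZMod.natCast_val, ZMod.cast_id, ZMod.natCast_val, ZMod.cast_id] at this
    linear_combination this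



lemma sqrt_neg_one_card : ∀ k : ℕ, k ≠ 0 → ∀ s : Finset (ZMod k),
    (∀ z ∈ s, z^2 = -1) → s.card ≤ 2 ^ k.primeFactors.card := by
  intro k
  induction k using Nat.recOnPosPrimePosCoprime with
  | zero => intro h; exact absurd rfl h
  | one =>
    intro _ s hs
    simp only [Nat.primeFactors_one, Finset.card_empty, pow_zero]
    exact Finset.card_le_one.mpr (fun a _ b _ => Subsingleton.elim a b)
  | prime_pow p n hp hn =>
    intro _ s hs
    have hω : (p^n).primeFactors.card = 1 := by
      rw [Nat.primeFactors_pow _ hn.ne', Nat.Prime.primeFactors hp]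
      simp
    rw [hω, pow_one]
    by_cases hp2 : p = 2
    · subst hp2
      rcases Nat.lt_or_ge n 2 with h2 | h2
      · interval_cases n
        calc s.card ≤ Fintype.card (ZMod (2^1)) := Finset.card_le_univ s
          _ = 2 := by simp [ZMod.card]
      · -- no solutions mod 2^n for n ≥ 2
        have hs' : s = ∅ := by
          rw [Finset.eq_empty_iff_forall_notMem]
          intro z hz
          have h4 : (4:ℕ) ∣ 2^n := by
            have : (4:ℕ) = 2^2 := by norm_num
            rw [this]; exact pow_dvd_pow 2 h2
          have := congrArg (ZMod.castHom h4 (ZMod 4)) (hs z hz)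
          rw [map_pow, map_neg, map_one] at this
          revert this
          generalize (ZMod.castHom h4 (ZMod 4)) z = w
          revert w; decide
        simp [hs']
    · rcases s.eq_empty_or_nonempty with rfl | ⟨z₀, hz₀⟩
      · simp
      · have hsub : s ⊆ {z₀, -z₀} := by
          intro z hz
          rcases sqrt_neg_one_eq_or hp hp2 hn (hs z₀ hz₀) (hs z hz) with h | h
          · simp [h]
          · simp [h]
        calc s.card ≤ ({z₀, -z₀} : Finset (ZMod (p^n))).card := Finset.card_le_card hsub
          _ ≤ 2 := Finset.card_insert_le _ _ |>.trans (by simp)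
  | coprime a b ha hb hab iha ihb =>
    intro _ s hs
    have ha0 : a ≠ 0 := by omega
    have hb0 : b ≠ 0 := by omega
    haveI : NeZero (a*b) := ⟨by positivity⟩
    let e := ZMod.chineseRemainder hab
    let f : ZMod (a*b) →+* ZMod a := (RingHom.fst _ _).comp (e : ZMod (a*b) →+* ZMod a × ZMod b)
    let g : ZMod (a*b) →+* ZMod b := (RingHom.snd _ _).comp (e : ZMod (a*b) →+* ZMod a × ZMod b)
    have hcard : s.card = (s.image e).card :=
      (Finset.card_image_of_injective s e.injective).symm
    have hsub : s.image e ⊆ (s.image f) ×ˢ (s.image g) := by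
      intro y hy
      rw [Finset.mem_image] at hy
      obtain ⟨z, hz, rfl⟩ := hy
      rw [Finset.mem_product]
      constructor
      · exact Finset.mem_image.mpr ⟨z, hz, rfl⟩
      · exact Finset.mem_image.mpr ⟨z, hz, rfl⟩
    have hfa : ∀ y ∈ s.image f, y^2 = -1 := by
      intro y hy
      rw [Finset.mem_image] at hy
      obtain ⟨z, hz, rfl⟩ := hy
      rw [← map_pow, hs z hz, map_neg, map_one]
    have hgb : ∀ y ∈ s.image g, y^2 = -1 := by
      intro y hy
      rw [Finset.mem_image] at hy
      obtain ⟨z, hz, rfl⟩ := hy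
      rw [← map_pow, hs z hz, map_neg, map_one]
    calc s.card = (s.image e).card := hcard
      _ ≤ ((s.image f) ×ˢ (s.image g)).card := Finset.card_le_card hsub
      _ = (s.image f).card * (s.image g).card := Finset.card_product _ _
      _ ≤ 2 ^ a.primeFactors.card * 2 ^ b.primeFactors.card :=
          Nat.mul_le_mul (iha ha0 _ hfa) (ihb hb0 _ hgb)
      _ = 2 ^ (a.primeFactors.card + b.primeFactors.card) := (pow_add 2 _ _).symm
      _ = 2 ^ (a*b).primeFactors.card := by
          rw [Nat.primeFactors_mul ha0 hb0,
            Finset.card_union_of_disjoint hab.disjoint_primeFactors]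



lemma two_pow_omega_le {k : ℕ} (hk : k ≠ 0) : 2 ^ k.primeFactors.card ≤ k.divisors.card := by
  rw [Nat.card_divisors hk]
  calc (2:ℕ) ^ k.primeFactors.card = ∏ _p ∈ k.primeFactors, 2 := by
        rw [Finset.prod_const]
    _ ≤ k.primeFactors.prod (k.factorization · + 1) := by
        apply Finset.prod_le_prod' <;> try intro p hp
        have : k.factorization p ≠ 0 := by
          rwa [← Finsupp.mem_support_iff, Nat.support_factorization]
        omega

lemma card_le_dd (N M τ : ℕ) :
    (((Finset.Ico N (2 * N) ×ˢ Finset.Ico M (2 * M)).filter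
        (fun p : ℕ × ℕ => p.1 * (p.1 + 1) + p.2 * (p.2 + 1) = τ)).card)
      ≤ (4*τ+2).divisors.card * (4*τ+2).divisors.card := by
  classical
  set S := 4*τ+2 with hS
  have hS0 : S ≠ 0 := by omega
  set A := ((Finset.Ico N (2 * N) ×ˢ Finset.Ico M (2 * M)).filter
      (fun p : ℕ × ℕ => p.1 * (p.1 + 1) + p.2 * (p.2 + 1) = τ)) with hA
  -- every element gives a square identity
  have hsq : ∀ p ∈ A, (2*p.1+1)^2 + (2*p.2+1)^2 = S := by
    intro p hp
    rw [hA, Finset.mem_filter] at hp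
    have h := hp.2
    calc (2*p.1+1)^2 + (2*p.2+1)^2 = 4*(p.1*(p.1+1)+p.2*(p.2+1))+2 := by ring
      _ = S := by rw [h]
  have hmaps : ∀ p ∈ A, Nat.gcd (2*p.1+1) (2*p.2+1) ∈ S.divisors := by
    intro p hp
    rw [Nat.mem_divisors]
    refine ⟨?_, hS0⟩
    have h1 : Nat.gcd (2*p.1+1) (2*p.2+1) ∣ (2*p.1+1) := Nat.gcd_dvd_left _ _
    have h2 : Nat.gcd (2*p.1+1) (2*p.2+1) ∣ (2*p.2+1) := Nat.gcd_dvd_right _ _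
    calc Nat.gcd (2*p.1+1) (2*p.2+1) ∣ (2*p.1+1)^2 + (2*p.2+1)^2 :=
          dvd_add (h1.trans (dvd_pow_self _ two_ne_zero)) (h2.trans (dvd_pow_self _ two_ne_zero))
      _ = S := hsq p hp
  rw [Finset.card_eq_sum_card_fiberwise hmaps]
  have hfib : ∀ g ∈ S.divisors,
      (A.filter (fun p => Nat.gcd (2*p.1+1) (2*p.2+1) = g)).card ≤ S.divisors.card := by
    intro g hg
    set B := A.filter (fun p => Nat.gcd (2*p.1+1) (2*p.2+1) = g) with hB
    rcases B.eq_empty_or_nonempty with hemp | ⟨p₀, hp₀⟩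
    · rw [hemp]; simp
    -- facts about any member of B
    have hBfact : ∀ p ∈ B, Nat.gcd (2*p.1+1) (2*p.2+1) = g ∧ (2*p.1+1)^2+(2*p.2+1)^2 = S := by
      intro p hp
      rw [hB, Finset.mem_filter] at hp
      exact ⟨hp.2, hsq p hp.1⟩
    have hg0 : 0 < g := by
      obtain ⟨h1, _⟩ := hBfact p₀ hp₀
      have : 0 < Nat.gcd (2*p₀.1+1) (2*p₀.2+1) := Nat.gcd_pos_of_pos_left _ (by omega)
      omega
    have hg2S : g*g ∣ S := by
      obtain ⟨h1, h2⟩ := hBfact p₀ hp₀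
      have hx : g ∣ 2*p₀.1+1 := h1 ▸ Nat.gcd_dvd_left _ _
      have hy : g ∣ 2*p₀.2+1 := h1 ▸ Nat.gcd_dvd_right _ _
      have : g*g ∣ (2*p₀.1+1)^2+(2*p₀.2+1)^2 := by
        exact dvd_add (by rw [sq]; exact mul_dvd_mul hx hx) (by rw [sq]; exact mul_dvd_mul hy hy)
      rwa [h2] at this
    set S' := S / (g*g) with hS'
    have hSS' : S = (g*g) * S' := by
      rw [hS', Nat.mul_div_cancel' hg2S]
    have hS'0 : S' ≠ 0 := by
      intro h; rw [h, mul_zero] at hSS'; exact hS0 hSS'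
    haveI : NeZero S' := ⟨hS'0⟩
    -- key per-element facts
    have hkey : ∀ p ∈ B, ((2*p.1+1)/g)^2 + ((2*p.2+1)/g)^2 = S'
        ∧ Nat.Coprime ((2*p.1+1)/g) ((2*p.2+1)/g)
        ∧ 2*p.1+1 = g * ((2*p.1+1)/g) ∧ 2*p.2+1 = g * ((2*p.2+1)/g) := by
      intro p hp
      obtain ⟨h1, h2⟩ := hBfact p hp
      have hx : g ∣ 2*p.1+1 := h1 ▸ Nat.gcd_dvd_left _ _
      have hy : g ∣ 2*p.2+1 := h1 ▸ Nat.gcd_dvd_right _ _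
      have hxe : 2*p.1+1 = g * ((2*p.1+1)/g) := (Nat.mul_div_cancel' hx).symm
      have hye : 2*p.2+1 = g * ((2*p.2+1)/g) := (Nat.mul_div_cancel' hy).symm
      refine ⟨?_, ?_, hxe, hye⟩
      · have : (g*g) * (((2*p.1+1)/g)^2 + ((2*p.2+1)/g)^2) = (g*g) * S' := by
          rw [← hSS', ← h2]
          conv_rhs => rw [hxe, hye]
          ring
        exact Nat.eq_of_mul_eq_mul_left (by positivity) this
      · rw [← h1]
        exact Nat.coprime_div_gcd_div_gcd (h1 ▸ hg0)
    -- coprimality with S'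
    have hcop : ∀ p ∈ B, Nat.Coprime ((2*p.2+1)/g) S' := by
      intro p hp
      obtain ⟨hs', hco, hxe, hye⟩ := hkey p hp
      set x' := (2*p.1+1)/g
      set y' := (2*p.2+1)/g
      have hd : Nat.gcd y' S' ∣ 1 := by
        have h1 : Nat.gcd y' S' ∣ y'^2 := (Nat.gcd_dvd_left _ _).trans (dvd_pow_self _ two_ne_zero)
        have h2 : Nat.gcd y' S' ∣ x'^2 := by
          have h3 : Nat.gcd y' S' ∣ S' := Nat.gcd_dvd_right _ _
          have : x'^2 = S' - y'^2 := by omega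
          rw [this]; exact Nat.dvd_sub h3 h1
        have h4 := Nat.dvd_gcd h2 h1
        have hcp : Nat.gcd (x'^2) (y'^2) = 1 := Nat.Coprime.pow 2 2 hco
        rwa [hcp] at h4
      exact Nat.dvd_one.mp hd
    -- positivity of quotients
    have hpos : ∀ p ∈ B, 1 ≤ (2*p.1+1)/g ∧ 1 ≤ (2*p.2+1)/g := by
      intro p hp
      obtain ⟨_, _, hxe, hye⟩ := hkey p hp
      constructor
      · by_contra h; push_neg at h; interval_cases ((2*p.1+1)/g) <;> omega
      · by_contra h; push_neg at h; interval_cases ((2*p.2+1)/g) <;> omega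
    -- injection into square roots of -1 mod S'
    set t := (Finset.univ : Finset (ZMod S')).filter (fun z => z^2 = -1) with ht
    have hinj : B.card ≤ t.card := by
      apply Finset.card_le_card_of_injOn
        (fun p => (((2*p.1+1)/g : ℕ) : ZMod S') * ((((2*p.2+1)/g : ℕ) : ZMod S'))⁻¹)
      · intro p hp
        obtain ⟨hs', hco, hxe, hye⟩ := hkey p hp
        have hc := hcop p hp
        simp only [Finset.mem_coe, ht, Finset.mem_filter]
        refine ⟨Finset.mem_univ _, ?_⟩
        set x' := (2*p.1+1)/g
        set y' := (2*p.2+1)/g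
        have hu : (y' : ZMod S') * (y' : ZMod S')⁻¹ = 1 := ZMod.coe_mul_inv_eq_one y' hc
        have hzero : ((x' : ZMod S'))^2 + ((y' : ZMod S'))^2 = 0 := by
          have h5 : ((x'^2 + y'^2 : ℕ) : ZMod S') = ((S' : ℕ) : ZMod S') := by rw [hs']
          rw [ZMod.natCast_self] at h5
          push_cast at h5
          exact h5
        calc ((x' : ZMod S') * (y' : ZMod S')⁻¹)^2
            = (x' : ZMod S')^2 * ((y' : ZMod S')⁻¹)^2 := by ring
          _ = -((y' : ZMod S')^2) * ((y' : ZMod S')⁻¹)^2 := by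
              rw [eq_neg_of_add_eq_zero_left hzero]
          _ = -(((y' : ZMod S') * (y' : ZMod S')⁻¹)^2) := by ring
          _ = -1 := by rw [hu]; simp
      · intro p1 hp1 p2 hp2 heq
        obtain ⟨hs1, hco1, hxe1, hye1⟩ := hkey p1 hp1
        obtain ⟨hs2, hco2, hxe2, hye2⟩ := hkey p2 hp2
        obtain ⟨hx1p, hy1p⟩ := hpos p1 hp1
        obtain ⟨hx2p, hy2p⟩ := hpos p2 hp2
        have hc1 := hcop p1 hp1
        have hc2 := hcop p2 hp2
        set x1 := (2*p1.1+1)/g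
        set y1 := (2*p1.2+1)/g
        set x2 := (2*p2.1+1)/g
        set y2 := (2*p2.2+1)/g
        have q1 : 1 ≤ x1^2 := Nat.one_le_pow _ _ (by omega)
        have q2 : 1 ≤ y1^2 := Nat.one_le_pow _ _ (by omega)
        have q3 : 1 ≤ x2^2 := Nat.one_le_pow _ _ (by omega)
        have q4 : 1 ≤ y2^2 := Nat.one_le_pow _ _ (by omega)
        have hu1 : (y1 : ZMod S') * (y1 : ZMod S')⁻¹ = 1 := ZMod.coe_mul_inv_eq_one y1 hc1
        have hu2 : (y2 : ZMod S') * (y2 : ZMod S')⁻¹ = 1 := ZMod.coe_mul_inv_eq_one y2 hc2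
        have hEq : ((x1 : ZMod S')) * (y2 : ZMod S') = (x2 : ZMod S') * (y1 : ZMod S') := by
          have h := congrArg (fun w => w * ((y1 : ZMod S') * (y2 : ZMod S'))) heq
          simp only at h
          have e1 : (x1 : ZMod S') * (y1:ZMod S')⁻¹ * ((y1:ZMod S') * y2)
              = ((y1:ZMod S') * (y1:ZMod S')⁻¹) * ((x1:ZMod S') * y2) := by ring
          have e2 : (x2 : ZMod S') * (y2:ZMod S')⁻¹ * ((y1:ZMod S') * y2)
              = ((y2:ZMod S') * (y2:ZMod S')⁻¹) * ((x2:ZMod S') * y1) := by ring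
          rw [e1, e2, hu1, hu2, one_mul, one_mul] at h
          exact h
        -- bounds
        have hb1 : x1 * y2 < S' := by
          have h1 : x1^2 ≤ S' - 1 := by omega
          have h2 : y2^2 ≤ S' - 1 := by omega
          have h3 : (x1*y2)^2 ≤ (S'-1)^2 := by
            calc (x1*y2)^2 = x1^2 * y2^2 := by ring
              _ ≤ (S'-1)*(S'-1) := Nat.mul_le_mul h1 h2
              _ = (S'-1)^2 := (sq _).symm
          have h4 : x1*y2 ≤ S'-1 := by
            by_contra h; push_neg at h
            have := Nat.pow_lt_pow_left h (two_ne_zero)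
            omega
          omega
        have hb2 : x2 * y1 < S' := by
          have h1 : x2^2 ≤ S' - 1 := by omega
          have h2 : y1^2 ≤ S' - 1 := by omega
          have h3 : (x2*y1)^2 ≤ (S'-1)^2 := by
            calc (x2*y1)^2 = x2^2 * y1^2 := by ring
              _ ≤ (S'-1)*(S'-1) := Nat.mul_le_mul h1 h2
              _ = (S'-1)^2 := (sq _).symm
          have h4 : x2*y1 ≤ S'-1 := by
            by_contra h; push_neg at h
            have := Nat.pow_lt_pow_left h (two_ne_zero)
            omega
          omega
        have hEqN : x1 * y2 = x2 * y1 := by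
          have h6 : ((x1 * y2 : ℕ) : ZMod S') = ((x2 * y1 : ℕ) : ZMod S') := by
            push_cast
            exact hEq
          have h7 := congrArg ZMod.val h6
          rwa [ZMod.val_cast_of_lt hb1, ZMod.val_cast_of_lt hb2] at h7
        have hyy : y1 = y2 := by
          have d1 : y1 ∣ y2 := by
            have : y1 ∣ y2 * x1 := ⟨x2, by rw [mul_comm y2 x1, hEqN]; ring⟩
            exact (Nat.Coprime.dvd_of_dvd_mul_right (hco1.symm) this)
          have d2 : y2 ∣ y1 := by
            have : y2 ∣ y1 * x2 := ⟨x1, by rw [mul_comm y1 x2, ← hEqN]; ring⟩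
            exact (Nat.Coprime.dvd_of_dvd_mul_right (hco2.symm) this)
          exact Nat.dvd_antisymm d1 d2
        have hxx : x1 = x2 := by
          rw [hyy] at hEqN
          exact Nat.eq_of_mul_eq_mul_right (by omega) hEqN
        have hP1 : p1.1 = p2.1 := by
          have : 2*p1.1+1 = 2*p2.1+1 := by rw [hxe1, hxe2, hxx]
          omega
        have hP2 : p1.2 = p2.2 := by
          have : 2*p1.2+1 = 2*p2.2+1 := by rw [hye1, hye2, hyy]
          omega
        exact Prod.ext hP1 hP2
    have ht2 : t.card ≤ 2 ^ S'.primeFactors.card := by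
      apply sqrt_neg_one_card S' hS'0
      intro z hz
      exact (Finset.mem_filter.mp hz).2
    have hωω : 2 ^ S'.primeFactors.card ≤ 2 ^ S.primeFactors.card := by
      apply Nat.pow_le_pow_right (by norm_num)
      apply Finset.card_le_card
      apply Nat.primeFactors_mono _ hS0
      exact ⟨g*g, by rw [hSS']; ring⟩
    calc B.card ≤ t.card := hinj
      _ ≤ 2 ^ S'.primeFactors.card := ht2
      _ ≤ 2 ^ S.primeFactors.card := hωω
      _ ≤ S.divisors.card := two_pow_omega_le hS0
  calc ∑ g ∈ S.divisors, (A.filter (fun p => Nat.gcd (2*p.1+1) (2*p.2+1) = g)).card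
      ≤ ∑ _g ∈ S.divisors, S.divisors.card := Finset.sum_le_sum hfib
    _ = S.divisors.card * S.divisors.card := by rw [Finset.sum_const, smul_eq_mul]


open Real in
lemma divisor_bound {δ : ℝ} (hδ : 0 < δ) :
    ∃ C : ℝ, 0 < C ∧ ∀ k : ℕ, k ≠ 0 → (k.divisors.card : ℝ) ≤ C * (k : ℝ) ^ δ := by
  have hL : 0 < Real.log 2 := Real.log_pos (by norm_num)
  set L := Real.log 2 with hLdef
  set A : ℝ := 1 + 1/(δ*L) with hAdef
  have hA1 : 1 ≤ A := by
    rw [hAdef]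
    have : 0 < 1/(δ*L) := by positivity
    linarith
  set T : ℕ := ⌈(2:ℝ) ^ (1/δ)⌉₊ with hTdef
  set P := (Finset.range (T+1)).filter Nat.Prime with hPdef
  refine ⟨A ^ P.card, by positivity, ?_⟩
  intro k hk
  -- pointwise bounds
  have key1 : ∀ p e : ℕ, 2 ≤ p → ((e+1 : ℕ) : ℝ) ≤ A * (((p^e : ℕ) : ℝ)) ^ δ := by
    intro p e hp
    have hpe : ((p^e : ℕ) : ℝ) = ((p:ℝ)) ^ (e:ℕ) := by push_cast; ring
    have h2 : ((p:ℝ)) ^ (e:ℕ) ≥ (2:ℝ) ^ (e:ℕ) := by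
      apply pow_le_pow_left₀ (by norm_num)
      exact_mod_cast hp
    have hrw : (((p:ℝ)) ^ (e:ℕ)) ^ δ ≥ ((2:ℝ) ^ (e:ℕ)) ^ δ := by
      apply Real.rpow_le_rpow (by positivity) h2 hδ.le
    have h3 : ((2:ℝ) ^ (e:ℕ)) ^ δ = Real.exp ((e:ℝ) * δ * L) := by
      rw [← Real.rpow_natCast (2:ℝ) e, ← Real.rpow_mul (by norm_num) , Real.rpow_def_of_pos (by norm_num)]
      rw [hLdef]; ring_nf
    have h4 : 1 + (e:ℝ) * δ * L ≤ Real.exp ((e:ℝ) * δ * L) := by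
      have := Real.add_one_le_exp ((e:ℝ) * δ * L)
      linarith
    have h5 : ((e+1 : ℕ) : ℝ) ≤ A * (1 + (e:ℝ)*δ*L) := by
      push_cast
      rw [hAdef]
      have he : (0:ℝ) ≤ (e:ℝ) := Nat.cast_nonneg e
      have hpos : 0 < δ*L := mul_pos hδ hL
      have expand : (1 + 1/(δ*L)) * (1 + (e:ℝ)*δ*L) = 1 + (e:ℝ)*δ*L + 1/(δ*L) + e := by
        field_simp
        ring
      have h6 : (0:ℝ) ≤ (e:ℝ)*δ*L := by positivity
      have h7 : (0:ℝ) < 1/(δ*L) := by positivity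
      linarith [expand]
    calc ((e+1 : ℕ) : ℝ) ≤ A * (1 + (e:ℝ)*δ*L) := h5
      _ ≤ A * Real.exp ((e:ℝ)*δ*L) := by
          apply mul_le_mul_of_nonneg_left _ (by linarith)
          exact h4
      _ = A * ((2:ℝ) ^ (e:ℕ)) ^ δ := by rw [h3]
      _ ≤ A * (((p:ℝ)) ^ (e:ℕ)) ^ δ := by
          apply mul_le_mul_of_nonneg_left hrw (by linarith)
      _ = A * (((p^e : ℕ) : ℝ)) ^ δ := by rw [hpe]
  have key2 : ∀ p e : ℕ, T + 1 ≤ p → ((e+1 : ℕ) : ℝ) ≤ (((p^e : ℕ) : ℝ)) ^ δ := by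
    intro p e hp
    have hp2 : (2:ℝ) ^ (1/δ) < (p:ℝ) := by
      have h1 : (2:ℝ) ^ (1/δ) ≤ (T:ℝ) := Nat.le_ceil _
      have h2 : (T:ℝ) < (p:ℝ) := by exact_mod_cast hp
      linarith
    have hppos : (0:ℝ) < (p:ℝ) := lt_trans (by positivity) hp2
    have h2lt : (2:ℝ) < (p:ℝ) ^ δ := by
      have := Real.rpow_lt_rpow (by positivity) hp2 hδ
      rwa [← Real.rpow_mul (by norm_num), one_div_mul_cancel hδ.ne', Real.rpow_one] at this
    have hpe : ((p^e : ℕ) : ℝ) = ((p:ℝ)) ^ (e:ℕ) := by push_cast; ring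
    have hswap : (((p:ℝ)) ^ (e:ℕ)) ^ δ = ((p:ℝ) ^ δ) ^ (e:ℕ) := by
      rw [← Real.rpow_natCast (p:ℝ) e, ← Real.rpow_mul hppos.le,
        mul_comm, Real.rpow_mul hppos.le, Real.rpow_natCast]
    have h2e : ((e+1 : ℕ) : ℝ) ≤ (2:ℝ) ^ (e:ℕ) := by
      have := @Nat.lt_two_pow_self e
      exact_mod_cast Nat.succ_le_of_lt this
    calc ((e+1 : ℕ) : ℝ) ≤ (2:ℝ) ^ (e:ℕ) := h2e
      _ ≤ ((p:ℝ) ^ δ) ^ (e:ℕ) := pow_le_pow_left₀ (by norm_num) h2lt.le e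
      _ = (((p^e : ℕ) : ℝ)) ^ δ := by rw [hpe, hswap]
  -- the product formula
  have hcard := Nat.card_divisors hk
  have hcast : ((k.divisors.card : ℕ) : ℝ)
      = ∏ p ∈ k.primeFactors, ((k.factorization p + 1 : ℕ) : ℝ) := by
    rw [hcard]; push_cast; rfl
  have hprodk : ∏ p ∈ k.primeFactors, (((p ^ (k.factorization p) : ℕ)) : ℝ) = (k:ℝ) := by
    rw [← Nat.cast_prod]
    congr 1
    conv_rhs => rw [← Nat.factorization_prod_pow_eq_self hk]
    rfl
  set c : ℕ → ℝ := fun p => if p ≤ T then A else 1 with hc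
  have hstep : ((k.divisors.card : ℕ) : ℝ)
      ≤ ∏ p ∈ k.primeFactors, (c p * (((p ^ (k.factorization p) : ℕ)) : ℝ) ^ δ) := by
    rw [hcast]
    apply Finset.prod_le_prod
    · intro p _; positivity
    · intro p hp
      have hpp : p.Prime := Nat.prime_of_mem_primeFactors hp
      rw [hc]
      by_cases hcase : p ≤ T
      · simp only [if_pos hcase]
        exact key1 p _ hpp.two_le
      · simp only [if_neg hcase, one_mul]
        exact key2 p _ (by omega)
  have hsplit : ∏ p ∈ k.primeFactors, (c p * (((p ^ (k.factorization p) : ℕ)) : ℝ) ^ δ)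
      = (∏ p ∈ k.primeFactors, c p) * ∏ p ∈ k.primeFactors, (((p ^ (k.factorization p) : ℕ)) : ℝ) ^ δ := by
    rw [Finset.prod_mul_distrib]
  have hrpow : ∏ p ∈ k.primeFactors, (((p ^ (k.factorization p) : ℕ)) : ℝ) ^ δ = (k:ℝ) ^ δ := by
    rw [Real.finset_prod_rpow _ _ (fun p _ => by positivity) δ, hprodk]
  have hcprod : ∏ p ∈ k.primeFactors, c p ≤ A ^ P.card := by
    have h1 : ∏ p ∈ k.primeFactors, c p = A ^ (k.primeFactors.filter (· ≤ T)).card := by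
      rw [hc, Finset.prod_ite, Finset.prod_const, Finset.prod_const, one_pow, mul_one]
    rw [h1]
    apply pow_le_pow_right₀ hA1
    apply Finset.card_le_card
    intro p hp
    rw [Finset.mem_filter] at hp
    rw [hPdef, Finset.mem_filter, Finset.mem_range]
    exact ⟨by omega, Nat.prime_of_mem_primeFactors hp.1⟩
  calc ((k.divisors.card : ℕ) : ℝ)
      ≤ (∏ p ∈ k.primeFactors, c p) * ((k:ℝ) ^ δ) := by
        rw [← hrpow]; rw [hsplit] at hstep; exact hstep
    _ ≤ A ^ P.card * (k:ℝ) ^ δ := by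
        apply mul_le_mul_of_nonneg_right hcprod (by positivity)


lemma n_determined {n₁ n₂ : ℕ} (h : n₁*(n₁+1) = n₂*(n₂+1)) : n₁ = n₂ := by
  rcases lt_trichotomy n₁ n₂ with h1 | h1 | h1
  · exfalso; have := Nat.mul_lt_mul'' h1 (by omega : n₁+1 < n₂+1); omega
  · exact h1
  · exfalso; have := Nat.mul_lt_mul'' h1 (by omega : n₂+1 < n₁+1); omega

lemma gap_lemma {N M n₁ m₁ n₂ m₂ : ℕ} (hM : 1 ≤ M) (hN : M*M ≤ N)
    (h1n : N ≤ n₁) (h1n' : n₁ < 2*N) (h1m : M ≤ m₁) (h1m' : m₁ < 2*M)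
    (h2n : N ≤ n₂) (h2n' : n₂ < 2*N) (h2m : M ≤ m₂) (h2m' : m₂ < 2*M)
    (he : n₁*(n₁+1)+m₁*(m₁+1) = n₂*(n₂+1)+m₂*(m₂+1)) (hlt : m₁ < m₂) :
    M + 1 ≤ 2*(m₂ - m₁) := by
  have hn : n₂ < n₁ := by
    by_contra h
    push_neg at h
    have h1 : n₁*(n₁+1) ≤ n₂*(n₂+1) := Nat.mul_le_mul h (by omega)
    have h2 : m₁*(m₁+1) < m₂*(m₂+1) := Nat.mul_lt_mul'' hlt (by omega)
    omega
  by_contra hcon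
  push_neg at hcon
  have hd : 2*m₂ ≤ 2*m₁ + M := by omega
  zify at he hn h1m' h2m' h1n h1n' h2n h2n' hN hM hlt hd h1m h2m
  have key : ((n₁:ℤ) - n₂)*((n₁:ℤ) + n₂ + 1) = ((m₂:ℤ) - m₁)*((m₂:ℤ) + m₁ + 1) := by
    linear_combination he
  nlinarith [key,
    mul_le_mul_of_nonneg_right (show (1:ℤ) ≤ (n₁:ℤ) - n₂ by omega)
      (show (0:ℤ) ≤ (n₁:ℤ) + n₂ + 1 by omega),
    mul_le_mul_of_nonneg_left (show (m₂:ℤ) + m₁ + 1 ≤ 4*M - 2 by omega)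
      (show (0:ℤ) ≤ (m₂:ℤ) - m₁ by omega),
    mul_le_mul_of_nonneg_right (show 2*((m₂:ℤ) - m₁) ≤ M by omega)
      (show (0:ℤ) ≤ 2*M - 1 by omega)]

lemma div_eq_le {a b n : ℕ} (hn : 0 < n) (h : a / n = b / n) : b ≤ a + (n-1) := by
  have h1 := Nat.div_add_mod a n
  have h2 := Nat.div_add_mod b n
  rw [← h] at h2
  have h3 := Nat.mod_lt a hn
  have h4 := Nat.mod_lt b hn
  generalize n * (a / n) = x at h1 h2
  omega

lemma case1_card {N M τ : ℕ} (hM : 1 ≤ M) (hMN : M ≤ N) (hbig : M*M ≤ N) :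
    (((Finset.Ico N (2 * N) ×ˢ Finset.Ico M (2 * M)).filter
        (fun p : ℕ × ℕ => p.1 * (p.1 + 1) + p.2 * (p.2 + 1) = τ)).card) ≤ 2 := by
  classical
  set A := ((Finset.Ico N (2 * N) ×ˢ Finset.Ico M (2 * M)).filter
      (fun p : ℕ × ℕ => p.1 * (p.1 + 1) + p.2 * (p.2 + 1) = τ)) with hA
  have hmem : ∀ p ∈ A, (N ≤ p.1 ∧ p.1 < 2*N) ∧ (M ≤ p.2 ∧ p.2 < 2*M)
      ∧ p.1*(p.1+1)+p.2*(p.2+1) = τ := by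
    intro p hp
    rw [hA, Finset.mem_filter, Finset.mem_product, Finset.mem_Ico, Finset.mem_Ico] at hp
    exact ⟨hp.1.1, hp.1.2, hp.2⟩
  have : A.card ≤ (Finset.range 2).card := by
    apply Finset.card_le_card_of_injOn (fun p => (2*(p.2 - M)) / (M+1))
    · intro p hp
      obtain ⟨_, ⟨hm1, hm2⟩, _⟩ := hmem p hp
      rw [Finset.mem_coe, Finset.mem_range]
      apply Nat.div_lt_of_lt_mul
      omega
    · intro p1 hp1 p2 hp2 heq
      simp only at heq
      obtain ⟨⟨hn11, hn12⟩, ⟨hm11, hm12⟩, he1⟩ := hmem p1 hp1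
      obtain ⟨⟨hn21, hn22⟩, ⟨hm21, hm22⟩, he2⟩ := hmem p2 hp2
      have hmm : p1.2 = p2.2 := by
        by_contra hne
        have hb1 := div_eq_le (show 0 < M+1 by omega) heq
        have hb2 := div_eq_le (show 0 < M+1 by omega) heq.symm
        rcases Nat.lt_or_ge p1.2 p2.2 with hlt | hge
        · have := gap_lemma hM hbig hn11 hn12 hm11 hm12 hn21 hn22 hm21 hm22
            (he1.trans he2.symm) hlt
          omega
        · have hlt2 : p2.2 < p1.2 := by omega
          have := gap_lemma hM hbig hn21 hn22 hm21 hm22 hn11 hn12 hm11 hm12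
            (he2.trans he1.symm) hlt2
          omega
      have hnn : p1.1 = p2.1 := by
        apply n_determined
        rw [hmm] at he1
        exact Nat.add_right_cancel (he1.trans he2.symm)
      exact Prod.ext hnn hmm
  simpa using this


theorem stmt_6 :
    ∀ ε : ℝ, 0 < ε → ∃ C : ℝ, 0 < C ∧
      ∀ N M τ : ℕ, 1 ≤ M → M ≤ N →
        (((Finset.Ico N (2 * N) ×ˢ Finset.Ico M (2 * M)).filter
            (fun p : ℕ × ℕ => p.1 * (p.1 + 1) + p.2 * (p.2 + 1) = τ)).card : ℝ)
          ≤ C * (M : ℝ) ^ ε := by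
  intro ε hε
  obtain ⟨C₀, hC₀, hdiv⟩ := divisor_bound (δ := ε/8) (by positivity)
  refine ⟨2 + C₀^2 * (34:ℝ) ^ ε, by positivity, ?_⟩
  intro N M τ hM hMN
  set A := ((Finset.Ico N (2 * N) ×ˢ Finset.Ico M (2 * M)).filter
      (fun p : ℕ × ℕ => p.1 * (p.1 + 1) + p.2 * (p.2 + 1) = τ)) with hA
  have hM1 : (1:ℝ) ≤ (M:ℝ) ^ ε := Real.one_le_rpow (by exact_mod_cast hM) hε.le
  have hMpos : (0:ℝ) ≤ (M:ℝ) ^ ε := by positivity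
  by_cases hbig : M*M ≤ N
  · have h2 := case1_card (τ := τ) hM hMN hbig
    calc (A.card : ℝ) ≤ 2 := by exact_mod_cast h2
      _ = 2 * 1 := by ring
      _ ≤ (2 + C₀^2 * (34:ℝ)^ε) * (M:ℝ)^ε := by
          apply mul_le_mul _ hM1 (by norm_num) (by positivity)
          have : (0:ℝ) ≤ C₀^2 * (34:ℝ)^ε := by positivity
          linarith
  · push_neg at hbig
    rcases A.eq_empty_or_nonempty with hemp | ⟨p₀, hp₀⟩
    · rw [hemp]
      simp only [Finset.card_empty, Nat.cast_zero]
      positivity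
    · have hmem : (N ≤ p₀.1 ∧ p₀.1 < 2*N) ∧ (M ≤ p₀.2 ∧ p₀.2 < 2*M)
          ∧ p₀.1*(p₀.1+1)+p₀.2*(p₀.2+1) = τ := by
        rw [hA, Finset.mem_filter, Finset.mem_product, Finset.mem_Ico, Finset.mem_Ico] at hp₀
        exact ⟨hp₀.1.1, hp₀.1.2, hp₀.2⟩
      obtain ⟨⟨hn1, hn2⟩, ⟨hm1, hm2⟩, heτ⟩ := hmem
      have hSle : 4*τ+2 ≤ 34 * ((M*M)*(M*M)) := by
        have h1 : p₀.1*(p₀.1+1) ≤ 4*((M*M)*(M*M)) := by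
          calc p₀.1*(p₀.1+1) ≤ (2*(M*M))*(2*(M*M)) := Nat.mul_le_mul (by omega) (by omega)
            _ = 4*((M*M)*(M*M)) := by ring
        have h2 : p₀.2*(p₀.2+1) ≤ 4*(M*M) := by
          calc p₀.2*(p₀.2+1) ≤ (2*M)*(2*M) := Nat.mul_le_mul (by omega) (by omega)
            _ = 4*(M*M) := by ring
        have h3 : M*M ≤ (M*M)*(M*M) := Nat.le_mul_of_pos_left _ (by positivity)
        omega
      have hS0 : 4*τ+2 ≠ 0 := by omega
      have hdS := hdiv (4*τ+2) hS0
      have hd := card_le_dd N M τ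
      have hScast : ((4*τ+2 : ℕ) : ℝ) ≤ (34:ℝ) * (M:ℝ)^(4:ℕ) := by
        have := hSle
        have hc : ((4*τ+2 : ℕ) : ℝ) ≤ ((34 * ((M*M)*(M*M)) : ℕ) : ℝ) := by exact_mod_cast this
        calc ((4*τ+2 : ℕ) : ℝ) ≤ ((34 * ((M*M)*(M*M)) : ℕ) : ℝ) := hc
          _ = (34:ℝ) * (M:ℝ)^(4:ℕ) := by push_cast; ring
      have hSnn : (0:ℝ) ≤ ((4*τ+2 : ℕ) : ℝ) := by positivity
      calc (A.card : ℝ)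
          ≤ ((4*τ+2).divisors.card : ℝ) * ((4*τ+2).divisors.card : ℝ) := by exact_mod_cast hd
        _ ≤ (C₀ * ((4*τ+2 : ℕ):ℝ) ^ (ε/8)) * (C₀ * ((4*τ+2 : ℕ):ℝ) ^ (ε/8)) := by
            apply mul_le_mul hdS hdS (by positivity) ?_
            exact le_trans (by positivity) hdS
        _ = C₀^2 * (((4*τ+2 : ℕ):ℝ) ^ (ε/8)) ^ (2:ℕ) := by ring
        _ = C₀^2 * ((4*τ+2 : ℕ):ℝ) ^ (ε/4) := by
            rw [← Real.rpow_natCast (((4*τ+2 : ℕ):ℝ) ^ (ε/8)) 2, ← Real.rpow_mul hSnn,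
              show (ε/8) * ((2:ℕ):ℝ) = ε/4 by push_cast; ring]
        _ ≤ C₀^2 * ((34:ℝ) * (M:ℝ)^(4:ℕ)) ^ (ε/4) := by
            apply mul_le_mul_of_nonneg_left _ (by positivity)
            exact Real.rpow_le_rpow hSnn hScast (by positivity)
        _ = C₀^2 * ((34:ℝ) ^ (ε/4) * ((M:ℝ)^(4:ℕ)) ^ (ε/4)) := by
            rw [Real.mul_rpow (by norm_num) (by positivity)]
        _ = C₀^2 * (34:ℝ) ^ (ε/4) * (M:ℝ) ^ ε := by
            rw [← Real.rpow_natCast (M:ℝ) 4, ← Real.rpow_mul (Nat.cast_nonneg M)]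
            rw [show ((4:ℕ):ℝ) * (ε/4) = ε by push_cast; ring]
            ring
        _ ≤ (2 + C₀^2 * (34:ℝ)^ε) * (M:ℝ)^ε := by
            apply mul_le_mul_of_nonneg_right _ hMpos
            have h34 : (34:ℝ)^(ε/4) ≤ (34:ℝ)^ε :=
              Real.rpow_le_rpow_of_exponent_le (by norm_num) (by linarith)
            nlinarith [sq_nonneg C₀]
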